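/- Define c_j ∈ F_n by c_j = a_2^{j/2} if j is even and c_j = a_1 a_2^{(j-1)/2} if j is odd, and g_j = (−1)^{j+1} c_j ∈ ℤF_n. Then for every positive integer m, under the Artin action g_m^{β(m)} = − g_{m-1}^{β(m)} a_3 a_2^{-1}, where β(m) = σ_1^m ρ ∈ B_n. -/

import Mathlib

namespace Artin

/-- `A j` is the generator `a_j = ξ_1⋯ξ_j` of the free group `F_n` (with `A 0 = 1`). -/
def A (j : ℕ) : FreeGroup ℕ := if j = 0 then 1 else FreeGroup.of j

/-- The effect of the Artin generator `σ_i` on the generators `a_j`. -/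
def fwd (i : ℕ) : ℕ → FreeGroup ℕ := fun j =>
  if 1 ≤ i ∧ j = i then A (i + 1) * (A i)⁻¹ * A (i - 1) else FreeGroup.of j

/-- The effect of `σ_i⁻¹` on the generators `a_j`. -/
def bwd (i : ℕ) : ℕ → FreeGroup ℕ := fun j =>
  if 1 ≤ i ∧ j = i then A (i - 1) * (A i)⁻¹ * A (i + 1) else FreeGroup.of j

lemma lift_fwd_A (i k : ℕ) (h : k ≠ i) : FreeGroup.lift (fwd i) (A k) = A k := by
  by_cases hk : k = 0
  · simp [A, hk]
  · simp only [A, if_neg hk, FreeGroup.lift_apply_of, fwd]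
    rw [if_neg]
    rintro ⟨-, rfl⟩; exact h rfl

lemma lift_bwd_A (i k : ℕ) (h : k ≠ i) : FreeGroup.lift (bwd i) (A k) = A k := by
  by_cases hk : k = 0
  · simp [A, hk]
  · simp only [A, if_neg hk, FreeGroup.lift_apply_of, bwd]
    rw [if_neg]
    rintro ⟨-, rfl⟩; exact h rfl

lemma comp_bwd_fwd (i : ℕ) :
    (FreeGroup.lift (bwd i)).comp (FreeGroup.lift (fwd i)) = MonoidHom.id _ := by
  apply FreeGroup.ext_hom
  intro j
  simp only [MonoidHom.comp_apply, FreeGroup.lift_apply_of, MonoidHom.id_apply]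
  unfold fwd
  by_cases h : 1 ≤ i ∧ j = i
  · obtain ⟨hi, hji⟩ := h
    subst hji
    rw [if_pos ⟨hi, rfl⟩]
    have hj : A j = FreeGroup.of j := by simp only [A, if_neg (by omega : ¬ j = 0)]
    rw [map_mul, map_mul, map_inv]
    rw [lift_bwd_A j (j + 1) (by omega), lift_bwd_A j (j - 1) (by omega)]
    rw [← hj]
    have hAj : FreeGroup.lift (bwd j) (A j) = A (j - 1) * (A j)⁻¹ * A (j + 1) := by
      rw [hj, FreeGroup.lift_apply_of, bwd, if_pos ⟨hi, rfl⟩, hj]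
    rw [hAj]
    group
  · rw [if_neg h]
    simp only [FreeGroup.lift_apply_of, bwd]
    rw [if_neg h]

lemma comp_fwd_bwd (i : ℕ) :
    (FreeGroup.lift (fwd i)).comp (FreeGroup.lift (bwd i)) = MonoidHom.id _ := by
  apply FreeGroup.ext_hom
  intro j
  simp only [MonoidHom.comp_apply, FreeGroup.lift_apply_of, MonoidHom.id_apply]
  unfold bwd
  by_cases h : 1 ≤ i ∧ j = i
  · obtain ⟨hi, hji⟩ := h
    subst hji
    rw [if_pos ⟨hi, rfl⟩]
    have hj : A j = FreeGroup.of j := by simp only [A, if_neg (by omega : ¬ j = 0)]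
    rw [map_mul, map_mul, map_inv]
    rw [lift_fwd_A j (j + 1) (by omega), lift_fwd_A j (j - 1) (by omega)]
    rw [← hj]
    have hAj : FreeGroup.lift (fwd j) (A j) = A (j + 1) * (A j)⁻¹ * A (j - 1) := by
      rw [hj, FreeGroup.lift_apply_of, fwd, if_pos ⟨hi, rfl⟩, hj]
    rw [hAj]
    group
  · rw [if_neg h]
    simp only [FreeGroup.lift_apply_of, fwd]
    rw [if_neg h]

/-- The automorphism of `F_n` given by the Artin generator `σ_i`. -/
def gen (i : ℕ) : MulAut (FreeGroup ℕ) where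
  toFun := FreeGroup.lift (fwd i)
  invFun := FreeGroup.lift (bwd i)
  left_inv x := by
    have := DFunLike.congr_fun (comp_bwd_fwd i) x
    simpa using this
  right_inv x := by
    have := DFunLike.congr_fun (comp_fwd_bwd i) x
    simpa using this
  map_mul' := map_mul _

/-- The Artin representation, as a homomorphism from words in the braid generators
(`FreeGroup ℕ`, letter `i` standing for `σ_i`) to the opposite of `Aut(F_n)`;
the opposite group is used so that `w^{βγ} = (w^β)^γ`. -/
def rep : FreeGroup ℕ →* (MulAut (FreeGroup ℕ))ᵐᵒᵖ :=
  FreeGroup.lift (fun i => MulOpposite.op (gen i))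

/-- The (right) Artin action: `act b w = w^b`. -/
def act (b w : FreeGroup ℕ) : FreeGroup ℕ := (rep b).unop w


/-- The word `ρ = σ_{n-1} ⋯ σ_2 σ_1` in the braid generators. -/
def ρw (n : ℕ) : FreeGroup ℕ :=
  (((List.range (n - 1)).map (fun k => FreeGroup.of (k + 1))).reverse).prod

/-- The word `δ = σ_1 σ_2 ⋯ σ_{n-1}` in the braid generators. -/
def δw (n : ℕ) : FreeGroup ℕ :=
  ((List.range (n - 1)).map (fun k => FreeGroup.of (k + 1))).prod

/-- The full-twist word `θ = (σ_1 ⋯ σ_{n-1})^n`. -/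
def θw (n : ℕ) : FreeGroup ℕ := δw n ^ n

/-- The word `β(m) = σ_1^m ρ`. -/
def βw (n m : ℕ) : FreeGroup ℕ := FreeGroup.of 1 ^ m * ρw n

/-- The integral group ring `ℤ F_n`. -/
abbrev GR := MonoidAlgebra ℤ (FreeGroup ℕ)

/-- The inclusion of `F_n` into the group ring `ℤ F_n`. -/
noncomputable def sg (w : FreeGroup ℕ) : GR := MonoidAlgebra.of ℤ (FreeGroup ℕ) w

/-- The element `c_j ∈ F_n`: `c_j = a_2^{j/2}` for `j` even, `c_j = a_1 a_2^{(j-1)/2}` for `j` odd. -/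
def c (j : ℕ) : FreeGroup ℕ :=
  if Even j then A 2 ^ (j / 2) else A 1 * A 2 ^ ((j - 1) / 2)

/-- The element `g_j = (−1)^{j+1} c_j ∈ ℤ F_n`. -/
noncomputable def g (j : ℕ) : GR := ((-1 : ℤ) ^ (j + 1)) • sg (c j)

/-- The `ℤ`-linear (ring) extension of the Artin action of a braid word to `ℤ F_n`. -/
noncomputable def actR (b : FreeGroup ℕ) : GR →+* GR :=
  MonoidAlgebra.mapDomainRingHom ℤ ((rep b).unop : FreeGroup ℕ ≃* FreeGroup ℕ).toMonoidHom

lemma act_mul' (b₁ b₂ w : FreeGroup ℕ) : act (b₁ * b₂) w = act b₂ (act b₁ w) := by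
  simp [act, map_mul]

lemma act_mul_arg (b x y : FreeGroup ℕ) : act b (x * y) = act b x * act b y :=
  map_mul ((rep b).unop) x y

lemma act_pow_arg (b x : FreeGroup ℕ) (k : ℕ) : act b (x ^ k) = act b x ^ k :=
  map_pow ((rep b).unop) x k

lemma act_inv_arg (b x : FreeGroup ℕ) : act b x⁻¹ = (act b x)⁻¹ :=
  map_inv ((rep b).unop) x

lemma act_of (i : ℕ) (w : FreeGroup ℕ) : act (FreeGroup.of i) w = FreeGroup.lift (fwd i) w := by
  simp [act, rep, gen]


lemma act_of_A_ne (i k : ℕ) (h : k ≠ i) : act (FreeGroup.of i) (A k) = A k := by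
  rw [act_of, lift_fwd_A _ _ h]

lemma act_of_A_self (i : ℕ) (hi : 1 ≤ i) :
    act (FreeGroup.of i) (A i) = A (i + 1) * (A i)⁻¹ * A (i - 1) := by
  rw [act_of]
  have hj : A i = FreeGroup.of i := by simp only [A, if_neg (by omega : ¬ i = 0)]
  rw [hj, FreeGroup.lift_apply_of, fwd, if_pos ⟨hi, rfl⟩, hj]

lemma act1_A1 : act (FreeGroup.of 1) (A 1) = A 2 * (A 1)⁻¹ := by
  rw [act_of_A_self 1 le_rfl]
  simp [A]

lemma act1m_A2 (m : ℕ) : act (FreeGroup.of 1 ^ m) (A 2) = A 2 := by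
  induction m with
  | zero => simp [act]
  | succ k ih => rw [pow_succ, act_mul', ih, act_of_A_ne 1 2 (by omega)]

lemma act1m_A1 (m : ℕ) : act (FreeGroup.of 1 ^ m) (A 1) =
    if Even m then A 2 ^ (m / 2) * A 1 * (A 2 ^ (m / 2))⁻¹
    else A 2 ^ (m / 2 + 1) * (A 1)⁻¹ * (A 2 ^ (m / 2))⁻¹ := by
  induction m with
  | zero => simp [act]
  | succ k ih =>
    rw [pow_succ, act_mul', ih]
    rcases Nat.even_or_odd k with he | ho
    · rw [if_pos he, if_neg (by simp [Nat.even_add_one, Nat.not_even_iff_odd]; exact he)]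
      obtain ⟨t, rfl⟩ := he
      have : (t + t + 1) / 2 = (t + t) / 2 := by omega
      rw [this]
      rw [act_mul_arg, act_mul_arg, act_inv_arg, act_pow_arg, act_of_A_ne 1 2 (by omega),
        act1_A1]
      group
    · rw [if_neg (by simpa [Nat.even_add_one] using ho), if_pos (by simpa [Nat.even_add_one] using ho)]
      obtain ⟨t, rfl⟩ := ho
      have : (2 * t + 1 + 1) / 2 = (2 * t + 1) / 2 + 1 := by omega
      rw [this]
      rw [act_mul_arg, act_mul_arg, act_inv_arg, act_inv_arg, act_pow_arg, act_pow_arg,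
        act_of_A_ne 1 2 (by omega), act1_A1]
      group


/-- Partial products of `ρ`. -/
def r (j : ℕ) : FreeGroup ℕ :=
  (((List.range j).map (fun k => FreeGroup.of (k + 1))).reverse).prod

lemma ρw_eq_r (n : ℕ) : ρw n = r (n - 1) := rfl

lemma r_succ (j : ℕ) : r (j + 1) = FreeGroup.of (j + 1) * r j := by
  simp [r, List.range_succ]

lemma act_r_A1 (j : ℕ) (hj : 1 ≤ j) : act (r j) (A 1) = A 2 * (A 1)⁻¹ := by
  induction j with
  | zero => omega
  | succ k ih =>
    rcases Nat.eq_or_lt_of_le hj with h | h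
    · have hk : k = 0 := by omega
      subst hk
      show act (r 1) (A 1) = _
      have : r 1 = FreeGroup.of 1 := by simp [r, List.range_succ]
      rw [this, act_of_A_self 1 le_rfl]
      simp [A]
    · rw [r_succ, act_mul', act_of_A_ne (k + 1) 1 (by omega), ih (by omega)]

lemma act_r_A2 (j : ℕ) (hj : 2 ≤ j) : act (r j) (A 2) = A 3 * (A 1)⁻¹ := by
  induction j with
  | zero => omega
  | succ k ih =>
    rcases Nat.eq_or_lt_of_le hj with h | h
    · have hk : k = 1 := by omega
      subst hk
      rw [r_succ, act_mul', act_of_A_self 2 (by omega)]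
      have : r 1 = FreeGroup.of 1 := by simp [r, List.range_succ]
      rw [this]
      rw [act_mul_arg, act_mul_arg, act_inv_arg]
      rw [act_of_A_ne 1 3 (by omega), act_of_A_ne 1 2 (by omega)]
      show _ * _ * act (FreeGroup.of 1) (A 1) = _
      rw [act1_A1]
      group
    · rw [r_succ, act_mul', act_of_A_ne (k + 1) 2 (by omega), ih (by omega)]


lemma key (n m : ℕ) (hn : 3 ≤ n) (hm : 1 ≤ m) :
    act (βw n m) (c m) = act (βw n m) (c (m - 1)) * (A 3 * (A 2)⁻¹) := by
  have h1 : 1 ≤ n - 1 := by omega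
  have h2 : 2 ≤ n - 1 := by omega
  unfold βw
  rw [ρw_eq_r, act_mul', act_mul']
  rcases Nat.even_or_odd m with he | ho
  · obtain ⟨k, hk⟩ := he
    obtain ⟨k', rfl⟩ : ∃ k', k = k' + 1 := ⟨k - 1, by omega⟩
    subst hk
    have hcm : c ((k' + 1) + (k' + 1)) = A 2 ^ (k' + 1) := by
      rw [c, if_pos ⟨k' + 1, rfl⟩]
      congr 1
      omega
    have hcm1 : c ((k' + 1) + (k' + 1) - 1) = A 1 * A 2 ^ k' := by
      rw [c, if_neg (Nat.not_even_iff.mpr (by omega))]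
      congr 2
      omega
    rw [hcm, hcm1]
    simp only [act_mul_arg, act_pow_arg, act1m_A2]
    rw [act1m_A1, if_pos ⟨k' + 1, rfl⟩]
    have hd : ((k' + 1) + (k' + 1)) / 2 = k' + 1 := by omega
    rw [hd]
    simp only [act_mul_arg, act_pow_arg, act_inv_arg, act1m_A2, act_r_A1 (n - 1) h1,
      act_r_A2 (n - 1) h2, pow_succ]
    group
  · obtain ⟨k, rfl⟩ := ho
    have hcm : c (2 * k + 1) = A 1 * A 2 ^ k := by
      rw [c, if_neg (Nat.not_even_iff.mpr (by omega))]
      congr 2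
      omega
    have hcm1 : c (2 * k + 1 - 1) = A 2 ^ k := by
      rw [c, if_pos (by exact (Nat.even_iff).mpr (by omega))]
      congr 1
      omega
    rw [hcm, hcm1]
    simp only [act_mul_arg, act_pow_arg, act1m_A2]
    rw [act1m_A1, if_neg (Nat.not_even_iff.mpr (by omega))]
    have hd : (2 * k + 1) / 2 = k := by omega
    rw [hd]
    simp only [act_mul_arg, act_pow_arg, act_inv_arg, act1m_A2, act_r_A1 (n - 1) h1,
      act_r_A2 (n - 1) h2, pow_succ]
    group

lemma actR_sg (b w : FreeGroup ℕ) : actR b (sg w) = sg (act b w) := by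
  simp [actR, sg, act, MonoidAlgebra.of_apply, Finsupp.mapDomain_single]

lemma sg_mul (x y : FreeGroup ℕ) : sg (x * y) = sg x * sg y :=
  map_mul (MonoidAlgebra.of ℤ (FreeGroup ℕ)) x y

/-- for every positive integer `m`, under the Artin action,
`g_m^{β(m)} = − g_{m-1}^{β(m)} a_3 a_2⁻¹`, where `β(m) = σ_1^m ρ ∈ B_n`. -/
theorem g_beta_relation (n : ℕ) (hn : 3 ≤ n) (m : ℕ) (hm : 1 ≤ m) :
    actR (βw n m) (g m) = -(actR (βw n m) (g (m - 1)) * sg (A 3 * (A 2)⁻¹)) := by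
  have hmm : m - 1 + 1 = m := by omega
  unfold g
  rw [map_zsmul, map_zsmul, actR_sg, actR_sg, hmm, key n m hn hm, sg_mul,
    smul_mul_assoc, pow_succ, mul_neg_one, neg_smul]

end Artin
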